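/- The 0-sectional curvature of the plane spanned by ∂/∂β₁ and ∂/∂β₂ in the Freund manifold equals 1/4, independently of the point. -/

import Mathlib

open Real

/-- Entries of the Fisher information metric of the Freund manifold, as
functions of the point `p = (α₁, β₁, α₂, β₂)` in `(0,∞)⁴`. -/
noncomputable def metF (i j : Fin 4) (p : Fin 4 → ℝ) : ℝ :=
  Matrix.diagonal
    ![1 / ((p 0) ^ 2 + p 0 * p 2),
      p 2 / ((p 1) ^ 2 * (p 0 + p 2)),
      1 / ((p 2) ^ 2 + p 0 * p 2),
      p 0 / ((p 3) ^ 2 * (p 0 + p 2))] i j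

/-- The metric as a matrix at `p`. -/
noncomputable def metM (p : Fin 4 → ℝ) : Matrix (Fin 4) (Fin 4) ℝ :=
  fun i j => metF i j p

/-- Partial derivative in the `i`-th coordinate. -/
noncomputable def pd (i : Fin 4) (F : (Fin 4 → ℝ) → ℝ) (p : Fin 4 → ℝ) : ℝ :=
  deriv (fun t => F (Function.update p i t)) (p i)

/-- Levi-Civita Christoffel symbols of the first kind. -/
noncomputable def lcLow (i j k : Fin 4) (p : Fin 4 → ℝ) : ℝ :=
  (pd i (metF j k) p + pd j (metF i k) p - pd k (metF i j) p) / 2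

/-- Levi-Civita Christoffel symbols of the second kind. -/
noncomputable def lcUp (h i j : Fin 4) (p : Fin 4 → ℝ) : ℝ :=
  ∑ k : Fin 4, (metM p)⁻¹ h k * lcLow i j k p

/-- Riemann curvature tensor `R^h_{ijk}` of the Levi-Civita connection. -/
noncomputable def riem (h i j k : Fin 4) (p : Fin 4 → ℝ) : ℝ :=
  pd i (lcUp h j k) p - pd j (lcUp h i k) p +
    ∑ l : Fin 4, (lcUp h i l p * lcUp l j k p - lcUp h j l p * lcUp l i k p)

/-- Sectional curvature of the coordinate 2-plane spanned by `∂_i` and `∂_j`. -/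
noncomputable def sec (i j : Fin 4) (p : Fin 4 → ℝ) : ℝ :=
  (∑ l : Fin 4, metF i l p * riem l i j j p) /
    (metF i i p * metF j j p - (metF i j p) ^ 2)

/-! ### Auxiliary lemmas -/

noncomputable def vecF (p : Fin 4 → ℝ) : Fin 4 → ℝ :=
  ![1 / ((p 0) ^ 2 + p 0 * p 2),
    p 2 / ((p 1) ^ 2 * (p 0 + p 2)),
    1 / ((p 2) ^ 2 + p 0 * p 2),
    p 0 / ((p 3) ^ 2 * (p 0 + p 2))]

lemma metM_diag (p : Fin 4 → ℝ) : metM p = Matrix.diagonal (vecF p) := rfl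

lemma lcUp_eq' (h i j : Fin 4) (p : Fin 4 → ℝ) :
    lcUp h i j p = Ring.inverse (vecF p) h * lcLow i j h p := by
  unfold lcUp
  rw [metM_diag, Matrix.inv_diagonal]
  rw [Finset.sum_eq_single h]
  · rw [Matrix.diagonal_apply_eq]
  · intro k _ hk
    rw [Matrix.diagonal_apply_ne _ (Ne.symm hk), zero_mul]
  · simp

lemma lcUp_eq (h i j : Fin 4) (p : Fin 4 → ℝ) (hv : ∀ k, vecF p k ≠ 0) :
    lcUp h i j p = (vecF p h)⁻¹ * lcLow i j h p := by
  unfold lcUp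
  have hinv : (metM p)⁻¹ = Matrix.diagonal (fun k => (vecF p k)⁻¹) := by
    apply Matrix.inv_eq_right_inv
    rw [metM_diag, Matrix.diagonal_mul_diagonal]
    have : (fun i => vecF p i * (vecF p i)⁻¹) = fun _ : Fin 4 => (1:ℝ) :=
      funext fun k => mul_inv_cancel₀ (hv k)
    rw [this]
    exact Matrix.diagonal_one
  rw [hinv, Finset.sum_eq_single h]
  · rw [Matrix.diagonal_apply_eq]
  · intro k _ hk
    rw [Matrix.diagonal_apply_ne _ (Ne.symm hk), zero_mul]
  · simp

lemma pd_const (i : Fin 4) (F : (Fin 4 → ℝ) → ℝ) (p : Fin 4 → ℝ)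
    (h : ∀ t, F (Function.update p i t) = F p) : pd i F p = 0 := by
  unfold pd
  rw [show (fun t => F (Function.update p i t)) = fun _ => F p from funext h]
  exact deriv_const _ _

lemma metF_offdiag (j k : Fin 4) (h : j ≠ k) (p : Fin 4 → ℝ) : metF j k p = 0 :=
  Matrix.diagonal_apply_ne _ h

lemma pd_offdiag (i j k : Fin 4) (h : j ≠ k) (p : Fin 4 → ℝ) : pd i (metF j k) p = 0 :=
  pd_const _ _ _ (fun t => by rw [metF_offdiag _ _ h, metF_offdiag _ _ h])

lemma pd1_g33 (p : Fin 4 → ℝ) : pd 1 (metF 3 3) p = 0 :=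
  pd_const _ _ _ (fun t => by simp [metF, Matrix.diagonal, Function.update])

lemma pd3_g11 (p : Fin 4 → ℝ) : pd 3 (metF 1 1) p = 0 :=
  pd_const _ _ _ (fun t => by simp [metF, Matrix.diagonal, Function.update])

lemma lcLow331 (q : Fin 4 → ℝ) : lcLow 3 3 1 q = 0 := by
  unfold lcLow
  rw [pd_offdiag 3 3 1 (by decide), pd1_g33]
  ring

lemma lcLow131 (q : Fin 4 → ℝ) : lcLow 1 3 1 q = 0 := by
  unfold lcLow
  rw [pd_offdiag 1 3 1 (by decide), pd_offdiag 1 1 3 (by decide), pd3_g11]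
  ring

lemma lcUp133 (q : Fin 4 → ℝ) : lcUp 1 3 3 q = 0 := by
  rw [lcUp_eq', lcLow331, mul_zero]

lemma lcUp113 (q : Fin 4 → ℝ) : lcUp 1 1 3 q = 0 := by
  rw [lcUp_eq', lcLow131, mul_zero]

/- derivatives of the diagonal metric entries -/

lemma pd0_g11 (p : Fin 4 → ℝ) (h : p 1 ^ 2 * (p 0 + p 2) ≠ 0) :
    pd 0 (metF 1 1) p =
      (0 * (p 1 ^ 2 * (p 0 + p 2)) - p 2 * (p 1 ^ 2 * 1)) / (p 1 ^ 2 * (p 0 + p 2)) ^ 2 := by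
  unfold pd
  have he : (fun t => metF 1 1 (Function.update p 0 t)) =
      fun t => p 2 / (p 1 ^ 2 * (t + p 2)) := by
    funext t; simp [metF, Matrix.diagonal, Function.update]
  rw [he]
  have hg : HasDerivAt (fun t : ℝ => p 1 ^ 2 * (t + p 2)) (p 1 ^ 2 * 1) (p 0) :=
    (((hasDerivAt_id (p 0)).add_const (p 2)).const_mul _)
  exact ((hasDerivAt_const (p 0) (p 2)).div hg h).deriv

lemma pd2_g11 (p : Fin 4 → ℝ) (h : p 1 ^ 2 * (p 0 + p 2) ≠ 0) :
    pd 2 (metF 1 1) p =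
      (1 * (p 1 ^ 2 * (p 0 + p 2)) - p 2 * (p 1 ^ 2 * 1)) / (p 1 ^ 2 * (p 0 + p 2)) ^ 2 := by
  unfold pd
  have he : (fun t => metF 1 1 (Function.update p 2 t)) =
      fun t => t / (p 1 ^ 2 * (p 0 + t)) := by
    funext t; simp [metF, Matrix.diagonal, Function.update]
  rw [he]
  have hg : HasDerivAt (fun t : ℝ => p 1 ^ 2 * (p 0 + t)) (p 1 ^ 2 * 1) (p 2) :=
    (((hasDerivAt_id (p 2)).const_add (p 0)).const_mul _)
  exact ((hasDerivAt_id (p 2)).div hg h).deriv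

lemma pd0_g33 (p : Fin 4 → ℝ) (h : p 3 ^ 2 * (p 0 + p 2) ≠ 0) :
    pd 0 (metF 3 3) p =
      (1 * (p 3 ^ 2 * (p 0 + p 2)) - p 0 * (p 3 ^ 2 * 1)) / (p 3 ^ 2 * (p 0 + p 2)) ^ 2 := by
  unfold pd
  have he : (fun t => metF 3 3 (Function.update p 0 t)) =
      fun t => t / (p 3 ^ 2 * (t + p 2)) := by
    funext t; simp [metF, Matrix.diagonal, Function.update]
  rw [he]
  have hg : HasDerivAt (fun t : ℝ => p 3 ^ 2 * (t + p 2)) (p 3 ^ 2 * 1) (p 0) :=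
    (((hasDerivAt_id (p 0)).add_const (p 2)).const_mul _)
  exact ((hasDerivAt_id (p 0)).div hg h).deriv

lemma pd2_g33 (p : Fin 4 → ℝ) (h : p 3 ^ 2 * (p 0 + p 2) ≠ 0) :
    pd 2 (metF 3 3) p =
      (0 * (p 3 ^ 2 * (p 0 + p 2)) - p 0 * (p 3 ^ 2 * 1)) / (p 3 ^ 2 * (p 0 + p 2)) ^ 2 := by
  unfold pd
  have he : (fun t => metF 3 3 (Function.update p 2 t)) =
      fun t => p 0 / (p 3 ^ 2 * (p 0 + t)) := by
    funext t; simp [metF, Matrix.diagonal, Function.update]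
  rw [he]
  have hg : HasDerivAt (fun t : ℝ => p 3 ^ 2 * (p 0 + t)) (p 3 ^ 2 * 1) (p 2) :=
    (((hasDerivAt_id (p 2)).const_add (p 0)).const_mul _)
  exact ((hasDerivAt_const (p 2) (p 0)).div hg h).deriv

/-- The 0-sectional curvature of the `(β₁, β₂)` coordinate plane equals `1/4`. -/
theorem freund_sectional_beta_plane (p : Fin 4 → ℝ) (hp : ∀ i, 0 < p i) :
    sec 1 3 p = 1 / 4 := by
  have ha := hp 0; have hb := hp 1; have hc := hp 2; have hd := hp 3
  have ha0 : p 0 ≠ 0 := ne_of_gt ha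
  have hb0 : p 1 ≠ 0 := ne_of_gt hb
  have hc0 : p 2 ≠ 0 := ne_of_gt hc
  have hd0 : p 3 ≠ 0 := ne_of_gt hd
  have hs : p 0 + p 2 ≠ 0 := by positivity
  have h11 : p 1 ^ 2 * (p 0 + p 2) ≠ 0 := by positivity
  have h33 : p 3 ^ 2 * (p 0 + p 2) ≠ 0 := by positivity
  have hv : ∀ k, vecF p k ≠ 0 := by
    intro k
    fin_cases k <;> simp only [vecF, Fin.isValue, Matrix.cons_val_zero, Matrix.cons_val_one,
      Matrix.head_cons, Fin.mk_one, Matrix.cons_val_two, Matrix.tail_cons, Fin.reduceFinMk,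
      Matrix.cons_val_three, Matrix.head_fin_const, Fin.zero_eta] <;> positivity
  -- vanishing Christoffel symbols
  have e130 : lcUp 1 3 0 p = 0 := by
    rw [lcUp_eq _ _ _ _ hv]
    have : lcLow 3 0 1 p = 0 := by
      unfold lcLow
      rw [pd_offdiag 3 0 1 (by decide), pd_offdiag 0 3 1 (by decide),
        pd_offdiag 1 3 0 (by decide)]
      ring
    rw [this, mul_zero]
  have e131 : lcUp 1 3 1 p = 0 := by
    rw [lcUp_eq _ _ _ _ hv]
    have : lcLow 3 1 1 p = 0 := by
      unfold lcLow
      rw [pd_offdiag 1 3 1 (by decide), pd3_g11]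
      ring
    rw [this, mul_zero]
  have e132 : lcUp 1 3 2 p = 0 := by
    rw [lcUp_eq _ _ _ _ hv]
    have : lcLow 3 2 1 p = 0 := by
      unfold lcLow
      rw [pd_offdiag 3 2 1 (by decide), pd_offdiag 2 3 1 (by decide),
        pd_offdiag 1 3 2 (by decide)]
      ring
    rw [this, mul_zero]
  have e133 := lcUp133 p
  have e113 := lcUp113 p
  -- nonvanishing Christoffel symbols
  have e110 : lcUp 1 1 0 p = -(1 / (2 * (p 0 + p 2))) := by
    rw [lcUp_eq _ _ _ _ hv]
    have : lcLow 1 0 1 p = pd 0 (metF 1 1) p / 2 := by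
      unfold lcLow
      rw [pd_offdiag 1 0 1 (by decide), pd_offdiag 1 1 0 (by decide)]
      ring
    rw [this, pd0_g11 p h11]
    show (vecF p 1)⁻¹ * _ = _
    simp only [vecF, Matrix.cons_val_one, Matrix.head_cons, Matrix.cons_val_zero]
    field_simp
    ring
  have e112 : lcUp 1 1 2 p = p 0 / (2 * p 2 * (p 0 + p 2)) := by
    rw [lcUp_eq _ _ _ _ hv]
    have : lcLow 1 2 1 p = pd 2 (metF 1 1) p / 2 := by
      unfold lcLow
      rw [pd_offdiag 1 2 1 (by decide), pd_offdiag 1 1 2 (by decide)]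
      ring
    rw [this, pd2_g11 p h11]
    show (vecF p 1)⁻¹ * _ = _
    simp only [vecF, Matrix.cons_val_one, Matrix.head_cons, Matrix.cons_val_zero]
    field_simp
    ring
  have e033 : lcUp 0 3 3 p = -(p 0 * p 2) / (2 * p 3 ^ 2 * (p 0 + p 2)) := by
    rw [lcUp_eq _ _ _ _ hv]
    have : lcLow 3 3 0 p = -(pd 0 (metF 3 3) p) / 2 := by
      unfold lcLow
      rw [pd_offdiag 3 3 0 (by decide)]
      ring
    rw [this, pd0_g33 p h33]
    show (vecF p 0)⁻¹ * _ = _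
    simp only [vecF, Matrix.cons_val_zero]
    field_simp
    ring
  have e233 : lcUp 2 3 3 p = p 0 * p 2 / (2 * p 3 ^ 2 * (p 0 + p 2)) := by
    rw [lcUp_eq _ _ _ _ hv]
    have : lcLow 3 3 2 p = -(pd 2 (metF 3 3) p) / 2 := by
      unfold lcLow
      rw [pd_offdiag 3 3 2 (by decide)]
      ring
    rw [this, pd2_g33 p h33]
    show (vecF p 2)⁻¹ * _ = _
    simp only [vecF, Matrix.cons_val_two, Matrix.tail_cons, Matrix.head_cons]
    field_simp
    ring
  -- the two derivative terms of the curvature vanish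
  have hpd1 : pd 1 (lcUp 1 3 3) p = 0 :=
    pd_const _ _ _ (fun t => by rw [lcUp133, lcUp133])
  have hpd3 : pd 3 (lcUp 1 1 3) p = 0 :=
    pd_const _ _ _ (fun t => by rw [lcUp113, lcUp113])
  -- the curvature component
  have hriem : riem 1 1 3 3 p = p 0 / (4 * p 3 ^ 2 * (p 0 + p 2)) := by
    unfold riem
    rw [Fin.sum_univ_four, hpd1, hpd3, e110, e033, e130, e113, e133, e131, e112, e233, e132]
    field_simp
    ring
  -- the metric entries
  have hm11 : metF 1 1 p = p 2 / (p 1 ^ 2 * (p 0 + p 2)) := by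
    simp [metF, Matrix.diagonal]
  have hm33 : metF 3 3 p = p 0 / (p 3 ^ 2 * (p 0 + p 2)) := by
    simp [metF, Matrix.diagonal]
  unfold sec
  rw [Fin.sum_univ_four, metF_offdiag 1 0 (by decide), metF_offdiag 1 2 (by decide),
    metF_offdiag 1 3 (by decide), hm11, hm33, hriem]
  field_simp
  ring
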